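/- Let c, v, w be positive real numbers with v ≠ w, let s, λ be real numbers, and let V : ℝ → ℝ be four times continuously differentiable with V(−1) = V(1) = 0, V′(−1) = 2c/w and V′(1) = −2c/v. Then it is not the case that both ∫_{−1}^{1} F(z) dz = 0 and ∫_{−1}^{1} z·F(z) dz = 0. -/

import Mathlib

/-- The Calabi-ansatz quantity `F(z) = (1/c²)·(V‴·V)′(z) − (s/c²)·V″(z) − λ²/c⁴`,
which equals `4𝒮(ω)` for the Calabi ansatz with momentum profile `V` on the product
orbifold surface `ℙ¹_{v,w} × Σ` over a curve of constant scalar curvature `s`. -/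
noncomputable def calabiF (c s lam : ℝ) (V : ℝ → ℝ) (z : ℝ) : ℝ :=
  (1 / c ^ 2) * deriv (fun t => deriv^[3] V t * V t) z
    - (s / c ^ 2) * deriv^[2] V z - lam ^ 2 / c ^ 4

theorem stmt_8 (c v w : ℝ) (hc : 0 < c) (hv : 0 < v) (hw : 0 < w) (hvw : v ≠ w)
    (s lam : ℝ) (V : ℝ → ℝ) (hV : ContDiff ℝ 4 V)
    (hVm : V (-1) = 0) (hVp : V 1 = 0)
    (hV'm : deriv V (-1) = 2 * c / w) (hV'p : deriv V 1 = -(2 * c) / v) :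
    ¬ ((∫ z in (-1 : ℝ)..1, calabiF c s lam V z) = 0 ∧
       (∫ z in (-1 : ℝ)..1, z * calabiF c s lam V z) = 0) := by
  rintro ⟨h1, h2⟩
  have hV' : ContDiff ℝ ((1 : ℕ) + (3 : ℕ)) V := by exact_mod_cast hV
  have hV'' : ContDiff ℝ ((2 : ℕ) + (2 : ℕ)) V := by exact_mod_cast hV
  have hV''' : ContDiff ℝ ((3 : ℕ) + (1 : ℕ)) V := by exact_mod_cast hV
  have hC3 : ContDiff ℝ 1 (deriv^[3] V) := ContDiff.iterate_deriv' 1 3 hV'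
  have hC2 : ContDiff ℝ 2 (deriv^[2] V) := ContDiff.iterate_deriv' 2 2 hV''
  have hC1 : ContDiff ℝ 3 (deriv^[1] V) := ContDiff.iterate_deriv' 3 1 hV'''
  have h21 : deriv^[2] V = deriv (deriv^[1] V) := rfl
  have h32 : deriv^[3] V = deriv (deriv^[2] V) := rfl
  have h10 : deriv^[1] V = deriv V := rfl
  have hdV : Differentiable ℝ V := hV.differentiable (by norm_num)
  have hdV1 : Differentiable ℝ (deriv^[1] V) := hC1.differentiable (by norm_num)
  have hdV2 : Differentiable ℝ (deriv^[2] V) := hC2.differentiable (by norm_num)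
  have hdV3 : Differentiable ℝ (deriv^[3] V) := hC3.differentiable (by norm_num)
  -- the product P = V‴ · V
  set P : ℝ → ℝ := fun t => deriv^[3] V t * V t with hP
  have hCP : ContDiff ℝ 1 P := hC3.mul (hV.of_le (by norm_num))
  have hdP : Differentiable ℝ P := hCP.differentiable (by norm_num)
  have hcontP' : Continuous (deriv P) := hCP.continuous_deriv le_rfl
  have hcontF : Continuous (calabiF c s lam V) := by
    unfold calabiF
    exact ((continuous_const.mul hcontP').sub
      (continuous_const.mul (h21 ▸ (hC1.continuous_deriv (by norm_num))))).sub continuous_const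
  -- First integral via FTC
  have hG : ∀ x ∈ Set.uIcc (-1 : ℝ) 1,
      HasDerivAt (fun z => (1 / c ^ 2) * P z - (s / c ^ 2) * deriv^[1] V z
        - (lam ^ 2 / c ^ 4) * z) (calabiF c s lam V x) x := by
    intro x _
    have hP' : HasDerivAt P (deriv P x) x := (hdP x).hasDerivAt
    have hV1' : HasDerivAt (deriv^[1] V) (deriv^[2] V x) x := by
      rw [h21]; exact (hdV1 x).hasDerivAt
    have := ((hP'.const_mul (1 / c ^ 2)).sub (hV1'.const_mul (s / c ^ 2))).sub
      ((hasDerivAt_id x).const_mul (lam ^ 2 / c ^ 4))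
    refine this.congr_deriv ?_
    unfold calabiF
    ring
  have int1 := intervalIntegral.integral_eq_sub_of_hasDerivAt hG
    (hcontF.intervalIntegrable _ _)
  -- Second integral via FTC
  have hH : ∀ x ∈ Set.uIcc (-1 : ℝ) 1,
      HasDerivAt (fun z => (1 / c ^ 2) * (z * P z - deriv^[2] V z * V z
        + deriv^[1] V z ^ 2 / 2) - (s / c ^ 2) * (z * deriv^[1] V z - V z)
        - (lam ^ 2 / c ^ 4) * (z ^ 2 / 2)) (x * calabiF c s lam V x) x := by
    intro x _
    have hP' : HasDerivAt P (deriv P x) x := (hdP x).hasDerivAt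
    have hV' : HasDerivAt V (deriv^[1] V x) x := (hdV x).hasDerivAt
    have hV1' : HasDerivAt (deriv^[1] V) (deriv^[2] V x) x := by
      rw [h21]; exact (hdV1 x).hasDerivAt
    have hV2' : HasDerivAt (deriv^[2] V) (deriv^[3] V x) x := by
      rw [h32]; exact (hdV2 x).hasDerivAt
    have t1 : HasDerivAt (fun z => z * P z) (P x + x * deriv P x) x := by
      exact ((hasDerivAt_id x).mul hP').congr_deriv (by simp)
    have t2 : HasDerivAt (fun z => deriv^[2] V z * V z)
        (deriv^[3] V x * V x + deriv^[2] V x * deriv^[1] V x) x := hV2'.mul hV'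
    have t3 : HasDerivAt (fun z => deriv^[1] V z ^ 2 / 2)
        (deriv^[1] V x * deriv^[2] V x) x := by
      have := (hV1'.pow 2).div_const 2
      exact this.congr_deriv (by ring)
    have t4 : HasDerivAt (fun z => z * deriv^[1] V z - V z)
        (x * deriv^[2] V x) x := by
      have := ((hasDerivAt_id x).mul hV1').sub hV'
      exact this.congr_deriv (by simp only [id_eq]; ring)
    have t5 : HasDerivAt (fun z : ℝ => z ^ 2 / 2) x x := by
      have := (hasDerivAt_pow 2 x).div_const 2
      exact this.congr_deriv (by push_cast; ring)
    have := ((((t1.sub t2).add t3).const_mul (1 / c ^ 2)).sub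
      (t4.const_mul (s / c ^ 2))).sub (t5.const_mul (lam ^ 2 / c ^ 4))
    refine this.congr_deriv ?_
    unfold calabiF
    have hPx : P x = deriv^[3] V x * V x := rfl
    rw [hPx]; ring
  have int2 := intervalIntegral.integral_eq_sub_of_hasDerivAt hH
    (((continuous_id.mul hcontF)).intervalIntegrable _ _)
  rw [h1] at int1
  rw [h2] at int2
  -- evaluate the boundary terms
  have hPp : P 1 = 0 := by simp [hP, hVp]
  have hPm : P (-1) = 0 := by simp [hP, hVm]
  have hV1p : deriv^[1] V 1 = -(2 * c) / v := by rw [h10]; exact hV'p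
  have hV1m : deriv^[1] V (-1) = 2 * c / w := by rw [h10]; exact hV'm
  simp only [hPp, hPm, hV1p, hV1m, hVp, hVm] at int1 int2
  have hc2 : (c : ℝ) ≠ 0 := ne_of_gt hc
  have hv0 : (v : ℝ) ≠ 0 := ne_of_gt hv
  have hw0 : (w : ℝ) ≠ 0 := ne_of_gt hw
  have e1 : s * (v + w) * c ^ 3 = lam ^ 2 * v * w := by
    field_simp at int1
    have h' : 2 * c ^ 8 * (s * (v + w) * c ^ 3 - lam ^ 2 * v * w) = 0 := by
      linear_combination (-c ^ 8) * int1
    have hne : (2 * c ^ 8 : ℝ) ≠ 0 := by positivity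
    have := (mul_eq_zero.mp h').resolve_left hne
    linarith
  have e2 : c * (w ^ 2 - v ^ 2) = s * v * w * (v - w) := by
    field_simp at int2
    have h' : 32 * c ^ 15 * v * w * (c * (w ^ 2 - v ^ 2) - s * v * w * (v - w)) = 0 := by
      linear_combination (-8 * c ^ 12 * v * w) * int2
    have hne : (32 * c ^ 15 * v * w : ℝ) ≠ 0 := by positivity
    have := (mul_eq_zero.mp h').resolve_left hne
    linarith
  have hvw' : v - w ≠ 0 := sub_ne_zero.mpr hvw
  have hfac : (v - w) * (c * (v + w) + s * v * w) = 0 := by linear_combination -e2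
  have key : c * (v + w) = -(s * v * w) := by
    rcases mul_eq_zero.mp hfac with h | h
    · exact absurd h hvw'
    · linarith
  have final : lam ^ 2 * (v * w) ^ 2 = -(c ^ 4 * (v + w) ^ 2) := by
    linear_combination (-(v * w)) * e1 + (c ^ 3 * (v + w)) * key
  have hpos1 : 0 ≤ lam ^ 2 * (v * w) ^ 2 := by positivity
  have hpos2 : 0 < c ^ 4 * (v + w) ^ 2 := by
    have : 0 < v + w := by linarith
    positivity
  linarith
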